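/- Let (e_n) be a sequence in a Banach space X, 𝓕 an analytic filter on ℕ (as a subset of the Cantor space ℘(ℕ) = {0,1}^ℕ) compatible with the biorthogonal system (e_n, e_n^♯), and E : X → ℝ^ℕ the map Ex = (e_n^♯(x)). Then the graph of E, namely { (x,(a_n)) : for all k ∈ ℕ, {m : ‖x − ∑_{n=1}^m a_n e_n‖ < 1/k} ∈ 𝓕 }, is an analytic subset of X × ℝ^ℕ; consequently E is Borel measurable, hence continuous. -/

import Mathlib

open Filter MeasureTheory

variable {X : Type*} [NormedAddCommGroup X] [NormedSpace ℝ X]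

/-- `θ(x, a, ε) = { m : ‖x − ∑_{n<m} a n • e n‖ < ε }`. -/
def thetaSet (e : ℕ → X) (x : X) (a : ℕ → ℝ) (ε : ℝ) : Set ℕ :=
  {m : ℕ | ‖x - ∑ n ∈ Finset.range m, a n • e n‖ < ε}

/-- The characteristic function identifying `℘(ℕ)` with the Cantor space `ℕ → Bool`. -/
noncomputable def chi (s : Set ℕ) : ℕ → Bool := fun n =>
  @decide (n ∈ s) (Classical.propDecidable _)

section AuxLemmas

open Set Topology


/-- Intersection of two analytic sets is analytic. -/
lemma AnalyticSet.inter' {α : Type*} [TopologicalSpace α] [T2Space α] {s t : Set α}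
    (hs : AnalyticSet s) (ht : AnalyticSet t) : AnalyticSet (s ∩ t) := by
  have h : s ∩ t = ⋂ b : Bool, (bif b then s else t) := by
    ext x; simp [Bool.forall_bool, and_comm]
  rw [h]
  exact AnalyticSet.iInter fun b => by cases b <;> simpa

/-- The preimage of an analytic set under a Borel-measurable map from a Polish space is
analytic. -/
lemma AnalyticSet.preimage_measurable {α β : Type*} [t : TopologicalSpace α] [PolishSpace α]
    [MeasurableSpace α] [BorelSpace α] [TopologicalSpace β] [T2Space β] [MeasurableSpace β]
    [OpensMeasurableSpace β] [SecondCountableTopology β]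
    {s : Set β} (hs : AnalyticSet s) {f : α → β} (hf : Measurable f) :
    AnalyticSet (f ⁻¹' s) := by
  obtain ⟨t', ht'le, hcont, hpolish⟩ := hf.exists_continuous
  have h1 : @AnalyticSet α t' (f ⁻¹' s) := @AnalyticSet.preimage α β t' _ hpolish _ s hs f hcont
  have h2 := @AnalyticSet.image_of_continuous α t' α t _ h1 id (continuous_id_of_le ht'le)
  simpa using h2

/-- Pettis-type theorem: a Borel measurable linear functional on a Banach space is continuous. -/
lemma measurable_linearMap_continuous {X : Type*} [NormedAddCommGroup X] [NormedSpace ℝ X]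
    [CompleteSpace X] [MeasurableSpace X] [BorelSpace X]
    (g : X →ₗ[ℝ] ℝ) (hg : Measurable g) : Continuous g := by
  set A : ℕ → Set X := fun j => {x | |g x| ≤ j} with hA
  have hAmeas : ∀ j, MeasurableSet (A j) := by
    intro j
    have : A j = g ⁻¹' (Set.Icc (-(j : ℝ)) j) := by
      ext x; simp [hA, abs_le]
    rw [this]
    exact hg measurableSet_Icc
  have hcover : (⋃ j, A j) = Set.univ := by
    ext x
    simp only [Set.mem_iUnion, Set.mem_univ, iff_true]
    obtain ⟨j, hj⟩ := exists_nat_ge (|g x|)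
    exact ⟨j, hj⟩
  have hex : ∃ j, ¬ IsMeagre (A j) := by
    by_contra h
    push_neg at h
    have huniv : IsMeagre (Set.univ : Set X) := hcover ▸ isMeagre_iUnion h
    have : Dense ((Set.univ : Set X)ᶜ) := dense_of_mem_residual huniv
    rw [Set.compl_univ] at this
    have h0 := this.nonempty
    simp at h0
  obtain ⟨j, hj⟩ := hex
  obtain ⟨U, hUopen, hAU⟩ := ((hAmeas j).baireMeasurableSet).residualEq_isOpen
  have hUne : U.Nonempty := by
    rcases U.eq_empty_or_nonempty with h | h
    · exfalso
      apply hj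
      subst h
      -- A j =ᵇ ∅ gives (A j)ᶜ residual
      refine Filter.mem_of_superset hAU ?_
      intro x hx
      simp only [Set.mem_setOf_eq] at hx ⊢
      intro hxA
      have : x ∈ (∅ : Set X) := by
        have := hx
        change (x ∈ A j) = (x ∈ (∅ : Set X)) at this
        rw [← this]; exact hxA
      exact this
    · exact h
  obtain ⟨u₀, hu₀⟩ := hUne
  obtain ⟨r, hr, hball⟩ := Metric.isOpen_iff.1 hUopen u₀ hu₀
  -- key bound near 0
  have key : ∀ x : X, ‖x‖ < r → |g x| ≤ 2 * j := by
    intro x hx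
    set T : X ≃ₜ X := Homeomorph.subRight x with hT
    have htend : Tendsto (⇑T) (residual X) (residual X) :=
      tendsto_residual_of_isOpenMap T.continuous T.isOpenMap
    have hAU' : (⇑T ⁻¹' A j : Set X) =ᶠ[residual X] (⇑T ⁻¹' U) := hAU.comp_tendsto htend
    -- residual set where both equalities hold
    have hres : {y : X | (y ∈ A j) = (y ∈ U)} ∩ {y : X | (T y ∈ A j) = (T y ∈ U)} ∈ residual X :=
      Filter.inter_mem hAU hAU'
    have hVopen : IsOpen (U ∩ ⇑T ⁻¹' U) := hUopen.inter (hUopen.preimage T.continuous)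
    have hVne : (U ∩ ⇑T ⁻¹' U).Nonempty := by
      refine ⟨u₀ + x, ?_, ?_⟩
      · apply hball
        simp [Metric.mem_ball, dist_eq_norm]
        simpa using hx
      · simp [hT, Homeomorph.subRight]
        exact hu₀
    obtain ⟨y, hyV, hyR⟩ := (dense_of_mem_residual hres).inter_open_nonempty _ hVopen hVne
    have hyA : y ∈ A j := by
      have := hyR.1
      simp only [Set.mem_setOf_eq] at this
      rw [this]; exact hyV.1
    have hyA' : y - x ∈ A j := by
      have := hyR.2
      simp only [Set.mem_setOf_eq] at this
      have h2 : T y ∈ A j := by rw [this]; exact hyV.2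
      simpa [hT, Homeomorph.subRight] using h2
    have : g x = g y - g (y - x) := by
      rw [map_sub]; ring
    rw [this]
    calc |g y - g (y - x)| ≤ |g y| + |g (y - x)| := abs_sub _ _
      _ ≤ j + j := add_le_add hyA hyA'
      _ = 2 * j := by ring
  -- convert to a linear bound
  have hbound : ∀ z : X, ‖g z‖ ≤ (4 * j / r) * ‖z‖ := by
    intro z
    rcases eq_or_ne z 0 with rfl | hz
    · simp
    · have hnz : 0 < ‖z‖ := norm_pos_iff.2 hz
      set c : ℝ := r / (2 * ‖z‖) with hc
      have hcpos : 0 < c := by positivity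
      have hnorm : ‖c • z‖ < r := by
        rw [norm_smul, Real.norm_eq_abs, abs_of_pos hcpos, hc]
        rw [div_mul_eq_mul_div, mul_comm]
        rw [div_lt_iff₀ (by positivity)]
        nlinarith
      have := key (c • z) hnorm
      rw [g.map_smul] at this
      simp only [smul_eq_mul, abs_mul, abs_of_pos hcpos] at this
      have h2 : |g z| ≤ 2 * j / c := by
        rw [le_div_iff₀ hcpos]
        linarith [this]
      rw [Real.norm_eq_abs]
      calc |g z| ≤ 2 * j / c := h2
        _ = (4 * j / r) * ‖z‖ := by
            rw [hc]; field_simp; ring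
  exact AddMonoidHomClass.continuous_of_bound g _ hbound

end AuxLemmas

open Set Topology in
/-- If `𝓕` is an analytic filter on `ℕ` (as a subset of the Cantor space)
compatible with the biorthogonal system `(e n, f n)` of a separable Banach space `X`,
then the graph of `E x = (f n x)ₙ`, namely
`{ (x, a) : ∀ k, θ(x, a, 1/(k+1)) ∈ 𝓕 }`, is analytic; consequently `E` is Borel
measurable, hence continuous. -/
theorem analytic_filter_graph_analytic_continuous
    [CompleteSpace X] [SecondCountableTopology X]
    [MeasurableSpace X] [BorelSpace X]
    (e : ℕ → X) (f : ℕ → X →ₗ[ℝ] ℝ)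
    (hbi : ∀ k n, f k (e n) = if k = n then 1 else 0)
    (F : Set (ℕ → Bool)) (hFanalytic : AnalyticSet F)
    (hfilter : (∀ s t : Set ℕ, chi s ∈ F → s ⊆ t → chi t ∈ F) ∧
      (∀ s t : Set ℕ, chi s ∈ F → chi t ∈ F → chi (s ∩ t) ∈ F) ∧
      chi (∅ : Set ℕ) ∉ F ∧ (∀ s : Set ℕ, (sᶜ).Finite → chi s ∈ F))
    (hcompat₁ : ∀ (x : X) (ε : ℝ), 0 < ε → chi (thetaSet e x (fun n => f n x) ε) ∈ F)
    (hcompat₂ : ∀ a : ℕ → ℝ, a ≠ 0 → ∃ k : ℕ, 1 ≤ k ∧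
      chi (thetaSet e 0 a (k : ℝ)⁻¹) ∉ F) :
    AnalyticSet {p : X × (ℕ → ℝ) |
        ∀ k : ℕ, chi (thetaSet e p.1 p.2 ((k : ℝ) + 1)⁻¹) ∈ F} ∧
      Measurable (fun x : X => (fun n => f n x : ℕ → ℝ)) ∧
      Continuous (fun x : X => (fun n => f n x : ℕ → ℝ)) := by
  obtain ⟨hup, hinter, hnempty, hcofin⟩ := hfilter
  set E : X → ℕ → ℝ := fun x n => f n x with hE
  -- measurability of the coding maps
  have hPhiMeas : ∀ ε : ℝ, Measurable (fun p : X × (ℕ → ℝ) => chi (thetaSet e p.1 p.2 ε)) := by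
    intro ε
    apply measurable_pi_lambda
    intro m
    apply measurable_to_bool
    have hc : Continuous (fun p : X × (ℕ → ℝ) =>
        ‖p.1 - ∑ n ∈ Finset.range m, p.2 n • e n‖) := by
      apply Continuous.norm
      apply Continuous.sub continuous_fst
      apply continuous_finset_sum
      intro n _
      exact ((continuous_apply n).comp continuous_snd).smul continuous_const
    have hopen : IsOpen {p : X × (ℕ → ℝ) |
        ‖p.1 - ∑ n ∈ Finset.range m, p.2 n • e n‖ < ε} := isOpen_lt hc continuous_const
    have heq : (fun p : X × (ℕ → ℝ) => chi (thetaSet e p.1 p.2 ε) m) ⁻¹' {true}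
        = {p : X × (ℕ → ℝ) | ‖p.1 - ∑ n ∈ Finset.range m, p.2 n • e n‖ < ε} := by
      ext p
      simp [chi, thetaSet]
      exact decide_eq_true_iff
    rw [heq]
    exact hopen.measurableSet
  set S := {p : X × (ℕ → ℝ) | ∀ k : ℕ, chi (thetaSet e p.1 p.2 ((k : ℝ) + 1)⁻¹) ∈ F} with hS
  -- Part 1: S is analytic
  have hSan : AnalyticSet S := by
    have hSeq : S = ⋂ k : ℕ,
        (fun p : X × (ℕ → ℝ) => chi (thetaSet e p.1 p.2 ((k : ℝ) + 1)⁻¹)) ⁻¹' F := by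
      ext p
      simp [hS, Set.mem_iInter, Set.mem_preimage]
    rw [hSeq]
    exact AnalyticSet.iInter fun k => AnalyticSet.preimage_measurable hFanalytic (hPhiMeas _)
  -- Part 2: S is the graph of E
  have hgraph : ∀ (x : X) (a : ℕ → ℝ), (x, a) ∈ S ↔ a = E x := by
    intro x a
    constructor
    · intro hmem
      by_contra hne
      have hd : (fun n => a n - f n x) ≠ 0 := by
        intro h0
        apply hne
        funext n
        have := congrFun h0 n
        simpa [hE, sub_eq_zero] using this
      obtain ⟨k, hk1, hkF⟩ := hcompat₂ _ hd
      apply hkF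
      have h1k : (1 : ℝ) ≤ (k : ℝ) := by exact_mod_cast hk1
      have hkpos : (0 : ℝ) < (k : ℝ) := lt_of_lt_of_le one_pos h1k
      set ε : ℝ := (((2 * k : ℕ) : ℝ) + 1)⁻¹ with hεdef
      have hεpos : 0 < ε := by positivity
      have h1 : chi (thetaSet e x a ε) ∈ F := hmem (2 * k)
      have h2 : chi (thetaSet e x (fun n => f n x) ε) ∈ F := hcompat₁ x ε hεpos
      have h2eps : 2 * ε ≤ (k : ℝ)⁻¹ := by
        rw [hεdef]
        push_cast
        rw [show (2 : ℝ) * (2 * (k : ℝ) + 1)⁻¹ = 2 / (2 * k + 1) by ring,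
          show ((k : ℝ))⁻¹ = 1 / k by ring]
        rw [div_le_div_iff₀ (by linarith) hkpos]
        linarith
      have hsub : thetaSet e x a ε ∩ thetaSet e x (fun n => f n x) ε ⊆
          thetaSet e 0 (fun n => a n - f n x) (k : ℝ)⁻¹ := by
        rintro m ⟨hm1, hm2⟩
        simp only [thetaSet, Set.mem_setOf_eq] at hm1 hm2 ⊢
        have hsum : ∑ n ∈ Finset.range m, (a n - f n x) • e n
            = (x - ∑ n ∈ Finset.range m, (f n x) • e n)
              - (x - ∑ n ∈ Finset.range m, a n • e n) := by
          simp only [sub_smul, Finset.sum_sub_distrib]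
          abel
        rw [zero_sub, norm_neg, hsum]
        calc ‖(x - ∑ n ∈ Finset.range m, (f n x) • e n)
              - (x - ∑ n ∈ Finset.range m, a n • e n)‖
            ≤ ‖x - ∑ n ∈ Finset.range m, (f n x) • e n‖
              + ‖x - ∑ n ∈ Finset.range m, a n • e n‖ := norm_sub_le _ _
          _ < ε + ε := add_lt_add hm2 hm1
          _ = 2 * ε := by ring
          _ ≤ (k : ℝ)⁻¹ := h2eps
      exact hup _ _ (hinter _ _ h1 h2) hsub
    · intro ha
      intro k
      have : a = fun n => f n x := ha
      rw [this]
      exact hcompat₁ x _ (by positivity)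
  -- Part 3: E is measurable
  have hEmeas : Measurable E := by
    intro B hB
    have him : ∀ C : Set (ℕ → ℝ), MeasurableSet C → AnalyticSet (E ⁻¹' C) := by
      intro C hC
      have h1 : AnalyticSet (S ∩ (Set.univ ×ˢ C)) :=
        AnalyticSet.inter' hSan ((MeasurableSet.univ.prod hC).analyticSet)
      have h2 := h1.image_of_continuous continuous_fst
      have heq : Prod.fst '' (S ∩ Set.univ ×ˢ C) = E ⁻¹' C := by
        ext x
        constructor
        · rintro ⟨p, ⟨hpS, hpC⟩, rfl⟩
          have hpE := (hgraph p.1 p.2).1 hpS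
          rw [Set.mem_preimage, ← hpE]
          exact hpC.2
        · intro hx
          exact ⟨(x, E x), ⟨(hgraph x (E x)).2 rfl, ⟨Set.mem_univ _, hx⟩⟩, rfl⟩
      rwa [heq] at h2
    exact (him B hB).measurableSet_of_compl
      (by rw [← Set.preimage_compl]; exact him _ hB.compl)
  -- Part 4: E is continuous
  have hgm : ∀ n, Measurable (f n) := fun n => (measurable_pi_apply n).comp hEmeas
  have hcont : Continuous E :=
    continuous_pi fun n => measurable_linearMap_continuous (f n) (hgm n)
  exact ⟨hSan, hEmeas, hcont⟩
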